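/- Let g : ℝ → ℝ be continuous and let x : ℝ → ℝ be twice differentiable with x''(θ) + x(θ) + g(θ) = 0 for all θ. Then x(2π) = x(0) and x'(2π) = x'(0) if and only if ∫₀^{2π} sin(s) g(s) ds = 0 and ∫₀^{2π} cos(s) g(s) ds = 0. -/

import Mathlib

open Real

/-- Periodicity criterion: a solution of `x'' + x + g = 0` matches its initial
position and velocity at `2π` iff the two Fourier-type integrals of `g` vanish. -/
theorem stmt_5 (g : ℝ → ℝ) (hg : Continuous g) (x : ℝ → ℝ)
    (hx1 : Differentiable ℝ x) (hx2 : Differentiable ℝ (deriv x))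
    (hode : ∀ θ : ℝ, deriv (deriv x) θ + x θ + g θ = 0) :
    (x (2 * π) = x 0 ∧ deriv x (2 * π) = deriv x 0) ↔
    ((∫ s in (0:ℝ)..(2 * π), Real.sin s * g s) = 0 ∧
      (∫ s in (0:ℝ)..(2 * π), Real.cos s * g s) = 0) := by
  have hF : ∀ θ : ℝ, HasDerivAt (fun θ => Real.cos θ * x θ - Real.sin θ * deriv x θ)
      (Real.sin θ * g θ) θ := by
    intro θ
    have h1 := (Real.hasDerivAt_cos θ).mul (hx1 θ).hasDerivAt
    have h2 := (Real.hasDerivAt_sin θ).mul (hx2 θ).hasDerivAt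
    have h := h1.sub h2
    refine h.congr_deriv ?_
    have hgθ : g θ = -(deriv (deriv x) θ + x θ) := by linarith [hode θ]
    rw [hgθ]; ring
  have hG : ∀ θ : ℝ, HasDerivAt (fun θ => -(Real.sin θ * x θ) - Real.cos θ * deriv x θ)
      (Real.cos θ * g θ) θ := by
    intro θ
    have h1 := ((Real.hasDerivAt_sin θ).mul (hx1 θ).hasDerivAt).neg
    have h2 := (Real.hasDerivAt_cos θ).mul (hx2 θ).hasDerivAt
    have h := h1.sub h2
    refine h.congr_deriv ?_
    have hgθ : g θ = -(deriv (deriv x) θ + x θ) := by linarith [hode θ]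
    rw [hgθ]; ring
  have hI1 : (∫ s in (0:ℝ)..(2 * π), Real.sin s * g s) = x (2 * π) - x 0 := by
    rw [intervalIntegral.integral_eq_sub_of_hasDerivAt (fun θ _ => hF θ)
      ((Real.continuous_sin.mul hg).intervalIntegrable 0 (2 * π))]
    simp [Real.cos_two_pi, Real.sin_two_pi]
  have hI2 : (∫ s in (0:ℝ)..(2 * π), Real.cos s * g s) = deriv x 0 - deriv x (2 * π) := by
    rw [intervalIntegral.integral_eq_sub_of_hasDerivAt (fun θ _ => hG θ)
      ((Real.continuous_cos.mul hg).intervalIntegrable 0 (2 * π))]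
    simp [Real.cos_two_pi, Real.sin_two_pi]
    ring
  rw [hI1, hI2]
  constructor
  · rintro ⟨a, b⟩; rw [a, b]; simp
  · rintro ⟨a, b⟩; constructor <;> linarith
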